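/- Let n ≥ 1, λ > 0, and let Ω ⊂ ℝⁿ be an open bounded convex set. Let u be a convex function on Ω whose Monge–Ampère measure satisfies Mu(A) ≥ λ·|A| for every Borel A ⊆ Ω. Then there exists C > 0 depending only on λ and n such that every section of u satisfies |S_h(x)| ≤ C h^{n/2}, for all x ∈ Ω, all subgradients p ∈ ∂u(x), and all h > 0. -/

import Mathlib

open MeasureTheory Metric Set
open scoped RealInnerProductSpace ENNReal Topology Asymptotics Pointwise

noncomputable section

/-- Euclidean space `ℝⁿ`. -/
abbrev E (n : ℕ) : Type := EuclideanSpace ℝ (Fin n)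

/-- The subdifferential of `u` at `x`, relative to the domain `Ω`. -/
def subdiff {n : ℕ} (Ω : Set (E n)) (u : E n → ℝ) (x : E n) : Set (E n) :=
  {p | ∀ y ∈ Ω, u x + ⟪p, y - x⟫ ≤ u y}

/-- The Monge–Ampère measure of `u` (relative to the domain `Ω`) of a set `A`. -/
def MAm {n : ℕ} (Ω : Set (E n)) (u : E n → ℝ) (A : Set (E n)) : ℝ≥0∞ :=
  volume (⋃ x ∈ A, subdiff Ω u x)

/-- The section `S_h(x)` of `u` at `x`, with subgradient `p` and height `h`. -/
def secn {n : ℕ} (Ω : Set (E n)) (u : E n → ℝ) (x p : E n) (h : ℝ) : Set (E n) :=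
  {y ∈ Ω | u y < u x + ⟪p, y - x⟫ + h}

/-- `u` is an Alexandrov solution of `lam ≤ det D²u ≤ Lam` in `Ω`. -/
def AlexSol {n : ℕ} (Ω : Set (E n)) (u : E n → ℝ) (lam Lam : ℝ) : Prop :=
  ∀ A : Set (E n), MeasurableSet A → A ⊆ Ω →
    ENNReal.ofReal lam * volume A ≤ MAm Ω u A ∧ MAm Ω u A ≤ ENNReal.ofReal Lam * volume A

/-- The class `D_{n,λ,Λ,K}`. -/
def memD {n : ℕ} (lam Lam K : ℝ) (u : E n → ℝ) : Prop :=
  ConvexOn ℝ (ball (0 : E n) 1) u ∧ AlexSol (ball (0 : E n) 1) u lam Lam ∧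
    ∀ x ∈ ball (0 : E n) 1, |u x| ≤ K

/-- `h̄(x)`: the supremum of heights `h` such that some section of `u` at `x` of height `h`
is compactly contained in the unit ball. -/
def hbar {n : ℕ} (u : E n → ℝ) (x : E n) : ℝ :=
  sSup ({0} ∪ {h : ℝ | 0 < h ∧ ∃ p ∈ subdiff (ball (0 : E n) 1) u x,
    closure (secn (ball (0 : E n) 1) u x p h) ⊆ ball (0 : E n) 1})

/-- `(p, H)` is an a.e. Hessian of `u` on `U`. -/
def IsAEHessian {n : ℕ} (U : Set (E n)) (u : E n → ℝ) (p : E n → E n)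
    (H : E n → Matrix (Fin n) (Fin n) ℝ) : Prop :=
  Measurable p ∧ (∀ i j, Measurable fun x => H x i j) ∧ (∀ x, (H x).PosSemidef) ∧
  ∀ᵐ x ∂(volume.restrict U),
    (fun y => u y - u x - ⟪p x, y - x⟫
        - (1/2) * ∑ i, ∑ j, H x i j * (y - x) i * (y - x) j)
      =o[nhds x] fun y => ‖y - x‖ ^ 2

/-! ### Auxiliary lemmas -/

/-- The volume of the box `{w : |wᵢ| ≤ c}` in `ℝⁿ` is `(2c)ⁿ`. -/
private lemma volume_box {n : ℕ} (c : ℝ) (hc : 0 ≤ c) :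
    volume {w : E n | ∀ i, |w i| ≤ c} = ENNReal.ofReal ((2*c)^n) := by
  have h1 : {w : E n | ∀ i, |w i| ≤ c}
      = ((MeasurableEquiv.toLp 2 (Fin n → ℝ)).symm) ⁻¹' (Set.univ.pi fun _ => Icc (-c) c) := by
    ext w
    simp only [mem_setOf_eq, mem_preimage, Set.mem_univ_pi, mem_Icc, abs_le]
    exact Iff.rfl
  rw [h1, (EuclideanSpace.volume_preserving_symm_measurableEquiv_toLp (Fin n)).measure_preimage
      ((MeasurableSet.univ_pi fun _ => measurableSet_Icc).nullMeasurableSet)]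
  rw [volume_pi_pi]
  have h2 : c - -c = 2*c := by ring
  simp only [Real.volume_Icc, h2, Finset.prod_const, Finset.card_univ, Fintype.card_fin]
  rw [← ENNReal.ofReal_pow (by linarith : (0:ℝ) ≤ 2*c)]

/-- The uniform average of finitely many points of a convex set lies in the set. -/
private lemma avg_mem {n : ℕ} {ι : Type*} [Fintype ι] (hcard : 0 < (Fintype.card ι))
    {C : Set (E n)} (hC : Convex ℝ C) {x : ι → E n} (hx : ∀ i, x i ∈ C) :
    ((Fintype.card ι : ℝ))⁻¹ • (∑ i, x i) ∈ C := by
  have h0 : (0:ℝ) < (Fintype.card ι : ℝ) := by exact_mod_cast hcard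
  rw [Finset.smul_sum]
  refine hC.sum_mem (fun i _ => by positivity) ?_ (fun i _ => hx i)
  rw [Finset.sum_const, Finset.card_univ, nsmul_eq_mul, mul_inv_cancel₀ h0.ne']

/-- Perturbing the average of `2n` points of a convex set by `(2n)⁻¹ (zᵢ - wᵢ)` keeps it inside. -/
private lemma avg_pm_mem {n : ℕ} (hn : 1 ≤ n) {C : Set (E n)} (hC : Convex ℝ C)
    {z w : Fin n → E n} (hz : ∀ j, z j ∈ C) (hw : ∀ j, w j ∈ C) (i : Fin n) :
    ((2*n:ℝ))⁻¹ • (∑ j, (z j + w j)) + ((2*n:ℝ))⁻¹ • (z i - w i) ∈ C := by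
  have key : ((2*n:ℝ))⁻¹ • (∑ j, (z j + w j)) + ((2*n:ℝ))⁻¹ • (z i - w i)
      = ((Fintype.card (Fin n ⊕ Fin n) : ℝ))⁻¹ •
          (∑ j, Sum.elim z (Function.update w i (z i)) j) := by
    have hcard : (Fintype.card (Fin n ⊕ Fin n) : ℝ) = 2*n := by
      simp [Fintype.card_sum]; ring
    rw [hcard, ← smul_add]
    congr 1
    rw [Fintype.sum_sum_type]
    simp only [Sum.elim_inl, Sum.elim_inr]
    rw [Finset.sum_update_of_mem (Finset.mem_univ i)]
    rw [Finset.sum_add_distrib, ← Finset.add_sum_erase _ w (Finset.mem_univ i), Finset.erase_eq]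
    abel
  rw [key]
  refine avg_mem (by simp; omega) hC ?_
  rintro (j | j)
  · simp [hz j]
  · simp only [Sum.elim_inr, Function.update_apply]
    by_cases hj : j = i <;> simp [hj, hz, hw]

/-- The main geometric construction: given a nonempty bounded open convex `G ⊆ ℝⁿ`, there are
vectors `v i`, a point `y ∈ closure G` and a number `d > 0` such that the points
`y ± (2n)⁻¹ v i` all lie in `closure G`, the volume of `G` is at most `2ⁿ d`, and the "dual"
bodies `{w : |⟨v i, w⟩| ≤ c}` have volume at most `(2c)ⁿ/d`. -/
private lemma geom_main {n : ℕ} (hn : 1 ≤ n) {G : Set (E n)} (hGo : IsOpen G)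
    (hGne : G.Nonempty) (hGb : Bornology.IsBounded G) (hGc : Convex ℝ G) :
    ∃ (v : Fin n → E n) (y : E n) (d : ℝ), 0 < d ∧ y ∈ closure G ∧
      (∀ i, y + ((2*n : ℝ))⁻¹ • v i ∈ closure G ∧ y - ((2*n : ℝ))⁻¹ • v i ∈ closure G) ∧
      volume G ≤ ENNReal.ofReal (2^n * d) ∧
      (∀ c : ℝ, 0 ≤ c →
        volume {w : E n | ∀ i, |⟪v i, w⟫| ≤ c} ≤ ENNReal.ofReal ((2*c)^n / d)) := by
  obtain ⟨s₀, hs₀⟩ := hGne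
  set clG := closure G with hclG
  have hclGc : Convex ℝ clG := hGc.closure
  have hclGcpt : IsCompact clG :=
    Metric.isCompact_of_isClosed_isBounded isClosed_closure hGb.closure
  set Kc : Set (E n) := clG - clG with hKc
  have hKccpt : IsCompact Kc := by
    have h1 : Kc = (fun q : E n × E n => q.1 - q.2) '' (clG ×ˢ clG) := by
      rw [Set.image_prod]; exact (Set.image2_sub).symm
    rw [h1]
    exact (hclGcpt.prod hclGcpt).image (continuous_fst.sub continuous_snd)
  obtain ⟨ε, hε, hball⟩ := Metric.isOpen_iff.1 hGo s₀ hs₀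
  have hεKc : ∀ j : Fin n, (ε/2) • EuclideanSpace.single j (1:ℝ) ∈ Kc := by
    intro j
    have h1 : s₀ + (ε/2) • EuclideanSpace.single j (1:ℝ) ∈ clG := by
      apply subset_closure
      apply hball
      simp only [Metric.mem_ball, dist_eq_norm, add_sub_cancel_left, norm_smul,
        EuclideanSpace.norm_single, norm_one, mul_one, Real.norm_eq_abs]
      rw [abs_of_pos (by linarith)]
      linarith
    have h2 := Set.sub_mem_sub h1 (subset_closure hs₀)
    simpa using h2
  -- maximize |det| over Kcⁿ
  set D : Set (Fin n → E n) := Set.univ.pi fun _ => Kc with hD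
  have hDcpt : IsCompact D := isCompact_univ_pi fun _ => hKccpt
  set F : (Fin n → E n) → ℝ := fun t => |(Matrix.of fun i j => (t j) i).det| with hF
  have hFcont : Continuous F := by
    apply Continuous.abs
    apply Continuous.matrix_det
    apply continuous_matrix
    intro i j
    exact ((continuous_apply i).comp
      ((EuclideanSpace.equiv (Fin n) ℝ).continuous.comp (continuous_apply j)))
  have hDne : D.Nonempty := ⟨fun j => (ε/2) • EuclideanSpace.single j (1:ℝ),
    Set.mem_univ_pi.2 fun j => hεKc j⟩
  obtain ⟨v, hvD, hvmax'⟩ := hDcpt.exists_isMaxOn hDne hFcont.continuousOn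
  have hvmax : ∀ t ∈ D, F t ≤ F v := fun t ht => hvmax' ht
  have hvKc : ∀ j, v j ∈ Kc := Set.mem_univ_pi.1 hvD
  set M : Matrix (Fin n) (Fin n) ℝ := Matrix.of fun i j => (v j) i with hM
  set d : ℝ := |M.det| with hd
  have hdpos : 0 < d := by
    have h1 : F (fun j => (ε/2) • EuclideanSpace.single j (1:ℝ)) ≤ F v :=
      hvmax _ (Set.mem_univ_pi.2 fun j => hεKc j)
    have h2 : F (fun j => (ε/2) • EuclideanSpace.single j (1:ℝ)) = (ε/2)^n := by
      have h3 : (Matrix.of fun i j => ((ε/2) • EuclideanSpace.single j (1:ℝ)) i)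
          = Matrix.diagonal (fun _ : Fin n => ε/2) := by
        ext i j
        by_cases hij : i = j <;>
          simp [hij, Matrix.diagonal, EuclideanSpace.single_apply, eq_comm]
      rw [hF]
      simp only [h3, Matrix.det_diagonal, Finset.prod_const, Finset.card_univ, Fintype.card_fin]
      rw [abs_of_pos (by positivity)]
    rw [hd]
    calc (0:ℝ) < (ε/2)^n := by positivity
    _ = F _ := h2.symm
    _ ≤ F v := h1
    _ = |M.det| := rfl
  have hdet_ne : M.det ≠ 0 := fun hc => by simp [hd, hc] at hdpos
  -- Kc is contained in the parallelepiped spanned by the `v j`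
  have hKcP : Kc ⊆ (Matrix.toEuclideanLin M) '' {w : E n | ∀ i, |w i| ≤ 1} := by
    intro q hq
    set b : Fin n → ℝ := (WithLp.equiv 2 (Fin n → ℝ)) q with hb
    set cc := (M.det)⁻¹ • (Matrix.cramer M b) with hcc
    have hMc : M.mulVec cc = b := by
      rw [hcc, Matrix.mulVec_smul, Matrix.mulVec_cramer, smul_smul,
        inv_mul_cancel₀ hdet_ne, one_smul]
    have hcbound : ∀ j, |cc j| ≤ 1 := by
      intro j
      have h1 : Matrix.cramer M b j = (M.updateCol j b).det := Matrix.cramer_apply M b j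
      have h2 : M.updateCol j b = Matrix.of fun i l => ((Function.update v j q) l) i := by
        ext i l
        simp only [Matrix.updateCol_apply, Matrix.of_apply, Function.update_apply]
        by_cases hl : l = j
        · simp only [hl, if_true]; rfl
        · simp [hl, hM]
      have h3 : |(M.updateCol j b).det| ≤ |M.det| := by
        have h4 := hvmax (Function.update v j q) (Set.mem_univ_pi.2 fun l => by
          rw [Function.update_apply]
          by_cases hl : l = j <;> simp [hl, hvKc l, hq])
        rw [hF] at h4
        rw [h2, hM]; exact h4
      have habs : |M.det| ≠ 0 := fun hc => hdet_ne (abs_eq_zero.1 hc)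
      rw [hcc]
      simp only [Pi.smul_apply, smul_eq_mul, abs_mul, abs_inv, h1]
      rw [inv_mul_le_iff₀ (lt_of_le_of_ne (abs_nonneg _) (Ne.symm habs)), mul_one]
      exact h3
    refine ⟨(WithLp.equiv 2 (Fin n → ℝ)).symm cc, ?_, ?_⟩
    · intro i
      have h5 : ((WithLp.equiv 2 (Fin n → ℝ)).symm cc) i = cc i := rfl
      rw [h5]; exact hcbound i
    · show WithLp.toLp 2 (M.mulVec cc) = q
      rw [hMc]
      exact (WithLp.equiv 2 (Fin n → ℝ)).symm_apply_apply q
  -- volume of G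
  have hvolG : volume G ≤ ENNReal.ofReal (2^n * d) := by
    have hsub : G ⊆ (fun g => g + (-s₀)) ⁻¹' ((Matrix.toEuclideanLin M) ''
        {w : E n | ∀ i, |w i| ≤ 1}) := by
      intro g hg
      apply hKcP
      have h12 : g - s₀ ∈ Kc := Set.sub_mem_sub (subset_closure hg) (subset_closure hs₀)
      rwa [sub_eq_add_neg] at h12
    calc volume G ≤ volume ((fun g => g + (-s₀)) ⁻¹' ((Matrix.toEuclideanLin M) ''
        {w : E n | ∀ i, |w i| ≤ 1})) := measure_mono hsub
      _ = volume ((Matrix.toEuclideanLin M) '' {w : E n | ∀ i, |w i| ≤ 1}) :=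
          measure_preimage_add_right volume (-s₀) _
      _ = ENNReal.ofReal |LinearMap.det (Matrix.toEuclideanLin M)| *
            volume {w : E n | ∀ i, |w i| ≤ 1} := Measure.addHaar_image_linearMap volume _ _
      _ = ENNReal.ofReal d * ENNReal.ofReal ((2*1)^n) := by
          rw [Matrix.toEuclideanLin_eq_toLin, LinearMap.det_toLin, volume_box 1 zero_le_one, ← hd]
      _ = ENNReal.ofReal (2^n * d) := by
          rw [← ENNReal.ofReal_mul hdpos.le]
          norm_num [mul_comm]
  -- volume of the polar-type bodies
  have hKvol : ∀ c : ℝ, 0 ≤ c →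
      volume {w : E n | ∀ i, |⟪v i, w⟫| ≤ c} ≤ ENNReal.ofReal ((2*c)^n / d) := by
    intro c hc
    set N : Matrix (Fin n) (Fin n) ℝ := Matrix.of fun i j => (v i) j with hN
    have hNdet : N.det = M.det := by
      rw [← Matrix.det_transpose M]; rfl
    have hNlin : LinearMap.det (Matrix.toEuclideanLin N) = N.det := by
      rw [Matrix.toEuclideanLin_eq_toLin, LinearMap.det_toLin]
    have hNne : LinearMap.det (Matrix.toEuclideanLin N) ≠ 0 := by
      rw [hNlin, hNdet]; exact hdet_ne
    have hset : {w : E n | ∀ i, |⟪v i, w⟫| ≤ c}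
        = (Matrix.toEuclideanLin N) ⁻¹' {w : E n | ∀ i, |w i| ≤ c} := by
      ext w
      simp only [mem_setOf_eq, mem_preimage]
      have hcoord : ∀ i, ((Matrix.toEuclideanLin N) w) i = ⟪v i, w⟫ := by
        intro i
        rw [Matrix.toEuclideanLin_apply]
        have h6 : ((WithLp.equiv 2 (Fin n → ℝ)).symm
            (N.mulVec ((WithLp.equiv 2 (Fin n → ℝ)) w))) i
            = (N.mulVec ((WithLp.equiv 2 (Fin n → ℝ)) w)) i := rfl
        change (N.mulVec w.ofLp) i = _
        simp only [Matrix.mulVec, dotProduct, hN, Matrix.of_apply]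
        rw [PiLp.inner_apply]
        simp [RCLike.inner_apply, conj_trivial, mul_comm]
      constructor
      · intro hyp i; rw [hcoord i]; exact hyp i
      · intro hyp i; rw [← hcoord i]; exact hyp i
    rw [hset, Measure.addHaar_preimage_linearMap volume hNne, volume_box c hc]
    rw [hNlin, hNdet]
    rw [← ENNReal.ofReal_mul (by positivity)]
    apply ENNReal.ofReal_le_ofReal
    rw [abs_inv, ← hd, div_eq_mul_inv, mul_comm]
  -- construct the center y
  have hchoice : ∀ j, ∃ zj, zj ∈ clG ∧ ∃ wj, wj ∈ clG ∧ zj - wj = v j := by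
    intro j
    rcases Set.mem_sub.1 (hvKc j) with ⟨zj, hzj, wj, hwj, hv⟩
    exact ⟨zj, hzj, wj, hwj, hv⟩
  choose z hz w hw hzw using hchoice
  set y : E n := ((2*n:ℝ))⁻¹ • (∑ j, (z j + w j)) with hy
  have hcard2 : (Fintype.card (Fin n ⊕ Fin n) : ℝ) = 2*n := by
    simp [Fintype.card_sum]; ring
  have hymem : y ∈ clG := by
    have h7 : y = ((Fintype.card (Fin n ⊕ Fin n) : ℝ))⁻¹ • (∑ j, Sum.elim z w j) := by
      rw [hcard2, hy]
      congr 1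
      rw [Fintype.sum_sum_type, Finset.sum_add_distrib]
      simp
    rw [h7]
    refine avg_mem (by simp; omega) hclGc ?_
    rintro (j | j)
    · simpa using hz j
    · simpa using hw j
  refine ⟨v, y, d, hdpos, hymem, ?_, hvolG, hKvol⟩
  intro i
  constructor
  · have h8 := avg_pm_mem hn hclGc hz hw i
    rw [hzw i] at h8
    exact h8
  · have h9 := avg_pm_mem hn hclGc hw hz i
    have h10 : (∑ j, (w j + z j)) = (∑ j, (z j + w j)) :=
      Finset.sum_congr rfl fun j _ => add_comm _ _
    rw [h10] at h9
    have h11 : w i - z i = -(v i) := by rw [← hzw i]; abel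
    rw [h11] at h9
    rw [hy, sub_eq_add_neg, ← smul_neg]
    exact h9

/-- Volume growth of sections: if `Mu ≥ λ dx` then `|S_h(x)| ≤ C h^{n/2}`. -/
theorem section_volume_growth (n : ℕ) (hn : 1 ≤ n) (lam : ℝ) (hlam : 0 < lam) :
    ∃ C : ℝ, 0 < C ∧
      ∀ (Ω : Set (E n)) (u : E n → ℝ),
        IsOpen Ω → Bornology.IsBounded Ω → Convex ℝ Ω → ConvexOn ℝ Ω u →
        (∀ A : Set (E n), MeasurableSet A → A ⊆ Ω →
          ENNReal.ofReal lam * volume A ≤ MAm Ω u A) →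
        ∀ x ∈ Ω, ∀ p ∈ subdiff Ω u x, ∀ h : ℝ, 0 < h →
          volume (secn Ω u x p h) ≤ ENNReal.ofReal (C * h ^ ((n : ℝ) / 2)) := by
  have hn1 : (1:ℝ) ≤ (n:ℝ) := by exact_mod_cast hn
  refine ⟨Real.sqrt ((32*n:ℝ)^n / lam), ?_, ?_⟩
  · apply Real.sqrt_pos.2
    apply div_pos (pow_pos (by linarith) n) hlam
  intro Ω u hΩo hΩb hΩc hu hMA x hx p hp h hh
  set C := Real.sqrt ((32*n:ℝ)^n / lam) with hC
  set S := secn Ω u x p h with hS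
  have hSsub : S ⊆ Ω := fun z hz => hz.1
  -- S is convex
  have hf : ConvexOn ℝ Ω (fun z => u z - ⟪p, z⟫) := by
    refine ⟨hΩc, fun z hz w hw a b ha hb hab => ?_⟩
    have h1 := hu.2 hz hw ha hb hab
    simp only [smul_eq_mul] at h1 ⊢
    rw [inner_add_right, inner_smul_right, inner_smul_right]
    linarith
  have hSeq : S = {z ∈ Ω | (fun z => u z - ⟪p, z⟫) z < u x - ⟪p, x⟫ + h} := by
    ext z
    simp only [hS, secn, mem_setOf_eq, mem_sep_iff]
    rw [inner_sub_right]
    constructor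
    · rintro ⟨h1, h2⟩; exact ⟨h1, by linarith⟩
    · rintro ⟨h1, h2⟩; exact ⟨h1, by linarith⟩
  have hSconv : Convex ℝ S := hSeq ▸ (hf.convex_lt _)
  by_cases hGne : (interior S).Nonempty
  swap
  · -- degenerate case: S has empty interior, hence measure zero
    have hspan : affineSpan ℝ S ≠ ⊤ := by
      intro htop
      exact hGne ((hSconv.interior_nonempty_iff_affineSpan_eq_top).2 htop)
    have h0 : volume S = 0 :=
      measure_mono_null (subset_affineSpan ℝ S)
        (Measure.addHaar_affineSubspace volume _ hspan)
    rw [h0]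
    exact zero_le
  set G := interior S with hG
  have hGo : IsOpen G := isOpen_interior
  have hGS : G ⊆ S := interior_subset
  have hGb : Bornology.IsBounded G := hΩb.subset (hGS.trans hSsub)
  have hGc : Convex ℝ G := hSconv.interior
  obtain ⟨v, y, d, hd, hy, hypm, hvolG, hK⟩ := geom_main hn hGo hGne hGb hGc
  have hclGS : closure G ⊆ closure S := closure_mono interior_subset
  -- the shrunk section S'
  set S' : Set (E n) := (fun z => (2:ℝ) • z + (-y)) ⁻¹' G with hS'
  have hS'G : S' ⊆ G := by
    intro z hz
    have hsG : (2:ℝ) • z + (-y) ∈ G := hz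
    have hz' : z = (2:ℝ)⁻¹ • ((2:ℝ) • z + (-y)) + (2:ℝ)⁻¹ • y := by
      rw [smul_add, smul_smul]
      norm_num
    rw [hG, hz']
    exact hSconv.combo_interior_closure_mem_interior hsG (hclGS hy)
      (by norm_num) (by norm_num) (by norm_num)
  have hS'meas : MeasurableSet S' :=
    (hGo.preimage ((continuous_id.const_smul (2:ℝ)).add continuous_const)).measurableSet
  have hvolS' : volume S' = ENNReal.ofReal (((2:ℝ)^n)⁻¹) * volume G := by
    have h1 : S' = ((2:ℝ) • ·) ⁻¹' ((fun w => w + (-y)) ⁻¹' G) := rfl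
    rw [h1, Measure.addHaar_preimage_smul volume two_ne_zero,
      measure_preimage_add_right volume (-y) G, finrank_euclideanSpace_fin]
    congr 2
    rw [abs_of_pos (by positivity)]
  -- the key subgradient bound
  have hsub : (⋃ y' ∈ S', subdiff Ω u y') ⊆ {q : E n | ∀ i, |⟪v i, q - p⟫| ≤ 4*n*h} := by
    intro q hq
    rw [mem_iUnion₂] at hq
    obtain ⟨y', hy'S', hq⟩ := hq
    have hy'G : y' ∈ G := hS'G hy'S'
    have hy'Ω : y' ∈ Ω := hSsub (hGS hy'G)
    have hsG : (2:ℝ) • y' + (-y) ∈ G := hy'S'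
    have hkey : ∀ z ∈ closure G, ⟪q - p, z - y'⟫ ≤ h := by
      have hG1 : ∀ z ∈ G, ⟪q - p, z - y'⟫ ≤ h := by
        intro z hzG
        have hzS : z ∈ S := hGS hzG
        have hzΩ : z ∈ Ω := hSsub hzS
        have h1 : u y' + ⟪q, z - y'⟫ ≤ u z := hq z hzΩ
        have h2 : u x + ⟪p, y' - x⟫ ≤ u y' := hp y' hy'Ω
        have h3 : u z < u x + ⟪p, z - x⟫ + h := hzS.2
        have e1 : ⟪p, z - x⟫ - ⟪p, y' - x⟫ = ⟪p, z - y'⟫ := by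
          rw [← inner_sub_right]
          congr 1
          abel
        have e2 : ⟪q - p, z - y'⟫ = ⟪q, z - y'⟫ - ⟪p, z - y'⟫ := inner_sub_left _ _ _
        linarith
      intro z hz
      have hcl : IsClosed {z : E n | ⟪q - p, z - y'⟫ ≤ h} :=
        isClosed_le (Continuous.inner continuous_const (continuous_sub_right y'))
          continuous_const
      exact closure_minimal hG1 hcl hz
    intro i
    obtain ⟨hplus, hminus⟩ := hypm i
    have h2n : (0:ℝ) < 2*n := by linarith
    have h4n : (0:ℝ) < 4*n := by linarith
    have hzplus : (2:ℝ)⁻¹ • (y + ((2*n:ℝ))⁻¹ • v i) + (2:ℝ)⁻¹ • ((2:ℝ) • y' + (-y))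
        ∈ closure G :=
      hGc.closure hplus (subset_closure hsG) (by norm_num) (by norm_num) (by norm_num)
    have hzminus : (2:ℝ)⁻¹ • (y - ((2*n:ℝ))⁻¹ • v i) + (2:ℝ)⁻¹ • ((2:ℝ) • y' + (-y))
        ∈ closure G :=
      hGc.closure hminus (subset_closure hsG) (by norm_num) (by norm_num) (by norm_num)
    have eplus : ((2:ℝ)⁻¹ • (y + ((2*n:ℝ))⁻¹ • v i) + (2:ℝ)⁻¹ • ((2:ℝ) • y' + (-y))) - y'
        = ((4*n:ℝ))⁻¹ • v i := by
      rw [smul_add, smul_add, smul_smul, smul_smul, smul_neg]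
      rw [show (2:ℝ)⁻¹ * (2*(n:ℝ))⁻¹ = (4*(n:ℝ))⁻¹ by rw [← mul_inv]; congr 1; ring]
      rw [show (2:ℝ)⁻¹ * 2 = 1 by norm_num, one_smul]
      abel
    have eminus : ((2:ℝ)⁻¹ • (y - ((2*n:ℝ))⁻¹ • v i) + (2:ℝ)⁻¹ • ((2:ℝ) • y' + (-y))) - y'
        = -(((4*n:ℝ))⁻¹ • v i) := by
      rw [smul_sub, smul_add, smul_smul, smul_smul, smul_neg]
      rw [show (2:ℝ)⁻¹ * (2*(n:ℝ))⁻¹ = (4*(n:ℝ))⁻¹ by rw [← mul_inv]; congr 1; ring]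
      rw [show (2:ℝ)⁻¹ * 2 = 1 by norm_num, one_smul]
      abel
    have h1 := hkey _ hzplus
    have h2 := hkey _ hzminus
    rw [eplus, real_inner_smul_right] at h1
    rw [eminus, inner_neg_right, real_inner_smul_right] at h2
    have h1' : ⟪q - p, v i⟫ ≤ 4*n*h := (inv_mul_le_iff₀ h4n).1 h1
    have h2' : -⟪q - p, v i⟫ ≤ 4*n*h := by
      refine (inv_mul_le_iff₀ h4n).1 ?_
      rw [mul_neg]
      linarith
    rw [real_inner_comm, abs_le]
    constructor
    · linarith
    · linarith
  -- put everything together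
  have hS'Ω : S' ⊆ Ω := hS'G.trans (hGS.trans hSsub)
  have hlow : ENNReal.ofReal lam * volume S' ≤ MAm Ω u S' := hMA S' hS'meas hS'Ω
  have hup : MAm Ω u S' ≤ ENNReal.ofReal ((2*(4*n*h))^n / d) := by
    rw [MAm]
    refine le_trans (measure_mono hsub) ?_
    have h1 : {q : E n | ∀ i, |⟪v i, q - p⟫| ≤ 4*n*h}
        = (fun q => q + (-p)) ⁻¹' {w : E n | ∀ i, |⟪v i, w⟫| ≤ 4*n*h} := by
      ext q
      simp only [mem_setOf_eq, mem_preimage, ← sub_eq_add_neg]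
    rw [h1, measure_preimage_add_right volume (-p) _]
    exact hK (4*n*h) (by positivity)
  set a := volume G with ha
  have hafin : a ≠ ⊤ := hGb.measure_lt_top.ne
  have ineq1 : ENNReal.ofReal (lam / 2^n) * a ≤ ENNReal.ofReal ((8*n*h)^n / d) := by
    have e1 : ENNReal.ofReal (lam / 2^n) * a
        = ENNReal.ofReal lam * (ENNReal.ofReal (((2:ℝ)^n)⁻¹) * a) := by
      rw [← mul_assoc, ← ENNReal.ofReal_mul hlam.le, div_eq_mul_inv]
    have e2 : (2*(4*n*h))^n = (8*n*h)^n := by ring_nf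
    rw [e1, ← hvolS', ← e2]
    exact le_trans hlow hup
  have ineq3 : ENNReal.ofReal (lam / 2^n) * (a * a)
      ≤ ENNReal.ofReal ((16*n*h)^n) := by
    have e4 : (8*(n:ℝ)*h)^n * 2^n = (16*(n:ℝ)*h)^n := by rw [← mul_pow]; ring_nf
    have e3 : (8*n*h)^n / d * (2^n * d) = (16*n*h)^n := by
      field_simp
      linear_combination e4
    calc ENNReal.ofReal (lam / 2^n) * (a*a)
        = (ENNReal.ofReal (lam / 2^n) * a) * a := by ring
      _ ≤ ENNReal.ofReal ((8*n*h)^n / d) * ENNReal.ofReal (2^n*d) :=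
          mul_le_mul' ineq1 hvolG
      _ = ENNReal.ofReal ((8*n*h)^n / d * (2^n * d)) := by
          rw [← ENNReal.ofReal_mul (by positivity)]
      _ = ENNReal.ofReal ((16*n*h)^n) := by rw [e3]
  have hlampos : (0:ℝ) < lam / 2^n := by positivity
  have hlamne : ENNReal.ofReal (lam / 2^n) ≠ 0 := by
    simp only [ne_eq, ENNReal.ofReal_eq_zero, not_le]
    exact hlampos
  have ineq4 : a * a ≤ ENNReal.ofReal ((lam / 2^n)⁻¹ * (16*n*h)^n) := by
    rw [ENNReal.ofReal_mul (inv_pos.2 hlampos).le, ENNReal.ofReal_inv_of_pos hlampos]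
    calc a * a = (ENNReal.ofReal (lam/2^n))⁻¹ * (ENNReal.ofReal (lam/2^n) * (a*a)) := by
          rw [← mul_assoc, ENNReal.inv_mul_cancel hlamne ENNReal.ofReal_ne_top, one_mul]
      _ ≤ (ENNReal.ofReal (lam/2^n))⁻¹ * ENNReal.ofReal ((16*n*h)^n) :=
          mul_le_mul_right ineq3 _
  -- final computation
  have hsq : (C * Real.sqrt (h^n)) * (C * Real.sqrt (h^n)) = (lam / 2^n)⁻¹ * (16*n*h)^n := by
    have h1 : Real.sqrt (h^n) * Real.sqrt (h^n) = h^n := Real.mul_self_sqrt (by positivity)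
    have h2 : C * C = (32*n:ℝ)^n / lam := Real.mul_self_sqrt (by positivity)
    have h3 : (C * Real.sqrt (h^n)) * (C * Real.sqrt (h^n))
        = (C * C) * (Real.sqrt (h^n) * Real.sqrt (h^n)) := by ring
    rw [h3, h1, h2]
    rw [inv_div, div_mul_eq_mul_div, div_mul_eq_mul_div, div_eq_div_iff hlam.ne' hlam.ne']
    rw [← mul_pow, ← mul_pow]
    ring_nf
  have hRnn : 0 ≤ C * Real.sqrt (h^n) := by positivity
  have hfin : a ≤ ENNReal.ofReal (C * Real.sqrt (h^n)) := by
    set A := a.toReal with hA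
    have hAnn : 0 ≤ A := ENNReal.toReal_nonneg
    have haA : a = ENNReal.ofReal A := (ENNReal.ofReal_toReal hafin).symm
    have h1 : ENNReal.ofReal (A * A) ≤ ENNReal.ofReal ((C * Real.sqrt (h^n)) * (C * Real.sqrt (h^n))) := by
      rw [ENNReal.ofReal_mul hAnn, ← haA, hsq]
      exact ineq4
    have h2 : A * A ≤ (C * Real.sqrt (h^n)) * (C * Real.sqrt (h^n)) :=
      (ENNReal.ofReal_le_ofReal_iff (by positivity)).1 h1
    have h3 : A ≤ C * Real.sqrt (h^n) := by
      nlinarith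
    rw [haA]
    exact ENNReal.ofReal_le_ofReal h3
  have hSa : volume S ≤ a := by
    calc volume S ≤ volume (closure S) := measure_mono subset_closure
      _ ≤ volume (interior S) + volume (frontier S) := by
          rw [closure_eq_interior_union_frontier]
          exact measure_union_le _ _
      _ = a := by rw [hSconv.addHaar_frontier volume, add_zero, ha, hG]
  have hhalf : C * h ^ ((n : ℝ) / 2) = C * Real.sqrt (h^n) := by
    congr 1
    rw [show ((n:ℝ)/2) = (n:ℝ) * (1/2) by ring, Real.rpow_mul hh.le, Real.rpow_natCast,
      Real.sqrt_eq_rpow]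
  rw [hhalf]
  exact le_trans hSa hfin
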